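/- For independent nonnegative random variables γ_B and γ_E with PDFs f_B, f_E and CDFs F_B, F_E, the average secrecy capacity satisfies E[max{log₂(1+γ_B) − log₂(1+γ_E), 0}] = (1/ln 2) ∫₀^∞ (1 − F_B(x)) F_E(x) / (1 + x) dx. -/

import Mathlib

open MeasureTheory ProbabilityTheory
open Set
open scoped ENNReal

lemma lintegral_inv_one_add (e b : ℝ) (he : 0 ≤ e) (hb : 0 ≤ b) :
    ∫⁻ x in Set.Ioi (0:ℝ), (Set.Ico e b).indicator (fun x => ENNReal.ofReal ((1+x)⁻¹)) x
      = ENNReal.ofReal (max (Real.log (1+b) - Real.log (1+e)) 0) := by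
  rw [lintegral_indicator measurableSet_Ico _, Measure.restrict_restrict measurableSet_Ico]
  have hae : (Ico e b ∩ Ioi 0 : Set ℝ) =ᵐ[volume] Ioo e b := by
    rw [MeasureTheory.ae_eq_set]
    constructor
    · apply measure_mono_null _ (measure_singleton e)
      intro x hx
      simp only [mem_diff, mem_inter_iff, mem_Ico, mem_Ioi, mem_Ioo, not_and] at hx
      have h1 := hx.1.1
      have h2 := hx.2
      simp only [mem_singleton_iff]
      by_contra hne
      exact absurd (h2 (lt_of_le_of_ne h1.1 (Ne.symm hne))) (not_not.2 h1.2)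
    · have : (Ioo e b : Set ℝ) \ (Ico e b ∩ Ioi 0) = ∅ := by
        rw [diff_eq_empty]
        intro x hx
        exact ⟨⟨hx.1.le, hx.2⟩, lt_of_le_of_lt he hx.1⟩
      rw [this]; exact measure_empty
  rw [Measure.restrict_congr_set hae]
  rcases le_or_gt b e with h | h
  · rw [Ioo_eq_empty (not_lt.2 h)]
    simp only [Measure.restrict_empty, lintegral_zero_measure]
    rw [max_eq_right, ENNReal.ofReal_zero]
    have := Real.log_le_log (by linarith) (by linarith : 1 + b ≤ 1 + e)
    linarith
  · have hcont : ContinuousOn (fun x : ℝ => (1+x)⁻¹) (Icc e b) := by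
      apply ContinuousOn.inv₀ (by fun_prop)
      intro x hx; nlinarith [hx.1]
    have hint : IntegrableOn (fun x : ℝ => (1+x)⁻¹) (Ioo e b) := by
      exact (hcont.integrableOn_Icc).mono_set Ioo_subset_Icc_self
    rw [← ofReal_integral_eq_lintegral_ofReal hint]
    · congr 1
      have : ∫ x in Ioo e b, (1+x)⁻¹ = ∫ x in e..b, (1+x)⁻¹ := by
        rw [intervalIntegral.integral_of_le h.le, ← integral_Ioc_eq_integral_Ioo]
      rw [this, intervalIntegral.integral_eq_sub_of_hasDerivAt (f := fun x => Real.log (1+x))]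
      · rw [max_eq_left]
        have := Real.log_le_log (by linarith) (by linarith : 1 + e ≤ 1 + b)
        linarith
      · intro x hx
        rw [uIcc_of_le h.le] at hx
        have h1 : (1:ℝ) + x ≠ 0 := by nlinarith [hx.1]
        have := ((hasDerivAt_id x).const_add 1).log h1
        simpa [one_div] using this
      · apply ContinuousOn.intervalIntegrable
        rw [uIcc_of_le h.le]; exact hcont
    · filter_upwards [ae_restrict_mem measurableSet_Ioo] with x hx
      have : (0:ℝ) < 1 + x := by nlinarith [hx.1]
      positivity


/-- The average secrecy capacity of independent SNRs `γ_B, γ_E` equals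
`(1/ln 2) ∫₀^∞ (1 − F_B(x)) F_E(x) / (1+x) dx`. -/
theorem average_secrecy_capacity_integral
    {Ω : Type*} [MeasurableSpace Ω] (μ : Measure Ω) [IsProbabilityMeasure μ]
    (γB γE : Ω → ℝ) (hγB : Measurable γB) (hγE : Measurable γE)
    (hBpos : ∀ ω, 0 ≤ γB ω) (hEpos : ∀ ω, 0 ≤ γE ω)
    (hindep : IndepFun γB γE μ)
    (hintB : Integrable γB μ) (hintE : Integrable γE μ)
    (fB fE : ℝ → ℝ)
    (hfB : μ.map γB = volume.withDensity (fun x => ENNReal.ofReal (fB x)))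
    (hfE : μ.map γE = volume.withDensity (fun x => ENNReal.ofReal (fE x)))
    (FB FE : ℝ → ℝ)
    (hFB : ∀ x, FB x = (μ {ω | γB ω ≤ x}).toReal)
    (hFE : ∀ x, FE x = (μ {ω | γE ω ≤ x}).toReal) :
    ∫ ω, max (Real.logb 2 (1 + γB ω) - Real.logb 2 (1 + γE ω)) 0 ∂μ
      = (1 / Real.log 2) * ∫ x in Set.Ioi (0:ℝ), (1 - FB x) * FE x / (1 + x) := by
  have hc0 : (0:ℝ) < Real.log 2 := Real.log_pos one_lt_two
  -- basic facts about the CDFs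
  have hFB1 : ∀ x, FB x ≤ 1 := by
    intro x
    rw [hFB x]
    calc (μ {ω | γB ω ≤ x}).toReal ≤ (1 : ℝ≥0∞).toReal :=
          ENNReal.toReal_mono ENNReal.one_ne_top prob_le_one
      _ = 1 := ENNReal.toReal_one
  have hFE0 : ∀ x, 0 ≤ FE x := fun x => by rw [hFE x]; exact ENNReal.toReal_nonneg
  have hFBm : Measurable FB := by
    have hmono : Monotone FB := by
      intro a b hab
      rw [hFB a, hFB b]
      exact ENNReal.toReal_mono (measure_ne_top _ _)
        (measure_mono fun ω h => le_trans h hab)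
    exact hmono.measurable
  have hFEm : Measurable FE := by
    have hmono : Monotone FE := by
      intro a b hab
      rw [hFE a, hFE b]
      exact ENNReal.toReal_mono (measure_ne_top _ _)
        (measure_mono fun ω h => le_trans h hab)
    exact hmono.measurable
  set g : Ω → ℝ := fun ω => max (Real.log (1 + γB ω) - Real.log (1 + γE ω)) 0 with hg
  have hgmeas : Measurable g :=
    ((Real.measurable_log.comp (measurable_const.add hγB)).sub
      (Real.measurable_log.comp (measurable_const.add hγE))).max measurable_const
  -- the key lintegral identity, via Tonelli
  have hkey : ∫⁻ ω, ENNReal.ofReal (g ω) ∂μ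
      = ∫⁻ x in Set.Ioi (0:ℝ), ENNReal.ofReal ((1 - FB x) * FE x / (1 + x)) := by
    have hS : MeasurableSet {p : Ω × ℝ | γE p.1 ≤ p.2 ∧ p.2 < γB p.1} :=
      (measurableSet_le (hγE.comp measurable_fst) measurable_snd).inter
        (measurableSet_lt measurable_snd (hγB.comp measurable_fst))
    set F : Ω × ℝ → ℝ≥0∞ := fun p => Set.indicator {p : Ω × ℝ | γE p.1 ≤ p.2 ∧ p.2 < γB p.1}
        (fun p => ENNReal.ofReal ((1 + p.2)⁻¹)) p with hF
    have hFmeas : Measurable F := Measurable.indicator (by fun_prop) hS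
    calc ∫⁻ ω, ENNReal.ofReal (g ω) ∂μ
        = ∫⁻ ω, (∫⁻ x in Set.Ioi (0:ℝ), F (ω, x)) ∂μ := by
          refine lintegral_congr fun ω => ?_
          rw [← lintegral_inv_one_add _ _ (hEpos ω) (hBpos ω)]
          refine lintegral_congr fun x => ?_
          simp only [F, Set.indicator_apply, Set.mem_Ico, Set.mem_setOf_eq]
      _ = ∫⁻ x in Set.Ioi (0:ℝ), ∫⁻ ω, F (ω, x) ∂μ :=
          lintegral_lintegral_swap hFmeas.aemeasurable
      _ = ∫⁻ x in Set.Ioi (0:ℝ), ENNReal.ofReal ((1 - FB x) * FE x / (1 + x)) := by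
          refine setLIntegral_congr_fun measurableSet_Ioi
            (fun x hx => ?_)
          have hmemE : MeasurableSet {ω | γE ω ≤ x} := hγE measurableSet_Iic
          have hmemB : MeasurableSet {ω | x < γB ω} := hγB measurableSet_Ioi
          have h2 : ∀ ω, F (ω, x)
              = Set.indicator ({ω | γE ω ≤ x} ∩ {ω | x < γB ω})
                  (fun _ => ENNReal.ofReal ((1 + x)⁻¹)) ω := by
            intro ω
            simp only [F, Set.indicator_apply, Set.mem_setOf_eq, Set.mem_inter_iff]
          simp_rw [h2]
          rw [lintegral_indicator_const (hmemE.inter hmemB)]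
          have hPE : μ {ω | γE ω ≤ x} = ENNReal.ofReal (FE x) := by
            rw [hFE x, ENNReal.ofReal_toReal (measure_ne_top μ _)]
          have hPB : μ {ω | x < γB ω} = ENNReal.ofReal (1 - FB x) := by
            have hc : {ω | x < γB ω} = (γB ⁻¹' Set.Iic x)ᶜ := by
              ext ω; simp [not_le]
            have hμ : μ {ω | γB ω ≤ x} = μ (γB ⁻¹' Set.Iic x) := rfl
            rw [hc, prob_compl_eq_one_sub (hγB measurableSet_Iic), hFB x, hμ,
              ENNReal.ofReal_sub _ ENNReal.toReal_nonneg, ENNReal.ofReal_one,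
              ENNReal.ofReal_toReal (measure_ne_top μ _)]
          have hcap : μ ({ω | γE ω ≤ x} ∩ {ω | x < γB ω})
              = μ {ω | x < γB ω} * μ {ω | γE ω ≤ x} := by
            have := hindep.measure_inter_preimage_eq_mul (Set.Ioi x) (Set.Iic x)
              measurableSet_Ioi measurableSet_Iic
            rw [Set.inter_comm] at this
            exact this
          rw [hcap, hPE, hPB, div_eq_mul_inv,
            ENNReal.ofReal_mul (mul_nonneg (by linarith [hFB1 x]) (hFE0 x)),
            ENNReal.ofReal_mul (by linarith [hFB1 x])]
          ring
  -- convert the LHS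
  have hLHSfun : ∀ ω, max (Real.logb 2 (1 + γB ω) - Real.logb 2 (1 + γE ω)) 0
      = g ω / Real.log 2 := by
    intro ω
    have h := max_div_div_right hc0.le
      (Real.log (1 + γB ω) - Real.log (1 + γE ω)) 0
    rw [zero_div] at h
    rw [Real.logb, Real.logb, div_sub_div_same, h]
  have hLHS : ∫ ω, max (Real.logb 2 (1 + γB ω) - Real.logb 2 (1 + γE ω)) 0 ∂μ
      = (∫⁻ ω, ENNReal.ofReal (g ω) ∂μ).toReal / Real.log 2 := by
    simp_rw [hLHSfun]
    rw [integral_div]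
    have h := integral_eq_lintegral_of_nonneg_ae (μ := μ) (f := g)
      (Filter.Eventually.of_forall fun ω => le_max_right _ _)
      hgmeas.aestronglyMeasurable
    rw [h]
  -- convert the RHS
  have hRHS : ∫ x in Set.Ioi (0:ℝ), (1 - FB x) * FE x / (1 + x)
      = (∫⁻ x in Set.Ioi (0:ℝ), ENNReal.ofReal ((1 - FB x) * FE x / (1 + x))).toReal := by
    rw [integral_eq_lintegral_of_nonneg_ae]
    · filter_upwards [ae_restrict_mem measurableSet_Ioi] with x hx
      have hx0 : (0:ℝ) < 1 + x := by simp only [Set.mem_Ioi] at hx; linarith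
      exact div_nonneg (mul_nonneg (by linarith [hFB1 x]) (hFE0 x)) hx0.le
    · exact (((measurable_const.sub hFBm).mul hFEm).div
        (measurable_const.add measurable_id)).aestronglyMeasurable
  rw [hLHS, hRHS, hkey]
  rw [div_eq_mul_inv, one_div, mul_comm]
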